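/- Let (G, G⁺, u) be a partially ordered abelian group with order unit u such that G ≅ G ⊗ ℚ, and let H ≤ G be a maximally singular subgroup. Equip G₀ = G/H with the quotient cone G₀⁺ = {x + H : ∃ y ∈ H with x + y ∈ G⁺}. Then (G₀, G₀⁺) is totally ordered: for every x ∈ G, either x + H ∈ G₀⁺ or −x + H ∈ G₀⁺. -/
import Mathlib


/-- the quotient of a ℚ-ordered group with order unit by a maximally
singular subgroup, equipped with the quotient cone, is totally ordered. -/
theorem stmt_3 {G : Type*} [AddCommGroup G] [Module ℚ G]
    (Gpos : Set G)
    (hzero : (0 : G) ∈ Gpos)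
    (hadd : ∀ a ∈ Gpos, ∀ b ∈ Gpos, a + b ∈ Gpos)
    (hpointed : ∀ a : G, a ∈ Gpos → -a ∈ Gpos → a = 0)
    (hsmul : ∀ q : ℚ, 0 ≤ q → ∀ a ∈ Gpos, q • a ∈ Gpos)
    (u : G) (hu : u ∈ Gpos)
    (hunit : ∀ x : G, ∃ n : ℕ, n • u - x ∈ Gpos)
    (H : AddSubgroup G)
    (hsing : ∀ a ∈ H, a ∈ Gpos → a = 0)
    (hmax : ∀ H' : AddSubgroup G, (∀ a ∈ H', a ∈ Gpos → a = 0) → H ≤ H' → H' = H)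
    (Q : Set (G ⧸ H))
    (hQ : Q = {ξ : G ⧸ H | ∃ x : G, QuotientAddGroup.mk x = ξ ∧ ∃ y ∈ H, x + y ∈ Gpos}) :
    ∀ x : G, (QuotientAddGroup.mk x : G ⧸ H) ∈ Q ∨
      (QuotientAddGroup.mk (-x) : G ⧸ H) ∈ Q := by
  subst hQ
  -- Step 1: H is divisible: if (m:ℚ)•g ∈ H for some m > 0 then g ∈ H.
  have hdiv : ∀ g : G, ∀ m : ℕ, 0 < m → (m : ℚ) • g ∈ H → g ∈ H := by
    intro g m hm hg
    set H'' : AddSubgroup G :=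
      { carrier := {g : G | ∃ m : ℕ, 0 < m ∧ (m : ℚ) • g ∈ H}
        zero_mem' := ⟨1, one_pos, by simpa using H.zero_mem⟩
        add_mem' := by
          rintro a b ⟨m₁, hm₁, ha⟩ ⟨m₂, hm₂, hb⟩
          refine ⟨m₁ * m₂, Nat.mul_pos hm₁ hm₂, ?_⟩
          have : ((m₁ * m₂ : ℕ) : ℚ) • (a + b)
              = (m₂ : ℚ) • ((m₁ : ℚ) • a) + (m₁ : ℚ) • ((m₂ : ℚ) • b) := by
            push_cast
            rw [smul_add, smul_smul, smul_smul, mul_comm]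
          rw [this]
          have h1 : (m₂ : ℚ) • ((m₁ : ℚ) • a) ∈ H := by
            rw [Nat.cast_smul_eq_nsmul]; exact AddSubgroup.nsmul_mem H ha m₂
          have h2 : (m₁ : ℚ) • ((m₂ : ℚ) • b) ∈ H := by
            rw [Nat.cast_smul_eq_nsmul]; exact AddSubgroup.nsmul_mem H hb m₁
          exact H.add_mem h1 h2
        neg_mem' := by
          rintro a ⟨m, hm, ha⟩
          exact ⟨m, hm, by rw [smul_neg]; exact H.neg_mem ha⟩ } with hH''
    have hsing'' : ∀ a ∈ H'', a ∈ Gpos → a = 0 := by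
      rintro a ⟨m, hm, ha⟩ hpos
      have hmQ : (0 : ℚ) < (m : ℚ) := by exact_mod_cast hm
      have h1 : (m : ℚ) • a ∈ Gpos := hsmul _ hmQ.le _ hpos
      have h2 : (m : ℚ) • a = 0 := hsing _ ha h1
      have := congrArg (fun z => ((m : ℚ))⁻¹ • z) h2
      simpa [smul_smul, inv_mul_cancel₀ hmQ.ne'] using this
    have hle : H ≤ H'' := by
      intro a ha
      exact ⟨1, one_pos, by simpa using ha⟩
    have hEq : H'' = H := hmax H'' hsing'' hle
    have : g ∈ H'' := ⟨m, hm, hg⟩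
    rwa [hEq] at this
  intro x
  by_contra hc
  push_neg at hc
  obtain ⟨hc1, hc2⟩ := hc
  have hA : ∀ y ∈ H, x + y ∉ Gpos := fun y hy hp => hc1 ⟨x, rfl, y, hy, hp⟩
  have hB : ∀ y ∈ H, -x + y ∉ Gpos := fun y hy hp => hc2 ⟨-x, rfl, y, hy, hp⟩
  -- Step 2: H ⊔ ℤx is singular.
  set H' : AddSubgroup G := H ⊔ AddSubgroup.zmultiples x with hH'
  have hsing' : ∀ a ∈ H', a ∈ Gpos → a = 0 := by
    intro a ha hpos
    rw [hH', AddSubgroup.mem_sup] at ha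
    obtain ⟨h, hh, z, hz, hhz⟩ := ha
    obtain ⟨k, hk⟩ := AddSubgroup.mem_zmultiples_iff.mp hz
    rcases lt_trichotomy k 0 with hk0 | hk0 | hk0
    · -- k < 0 : contradict hB
      exfalso
      set q : ℚ := ((-k : ℤ) : ℚ)⁻¹ with hq
      have hkQ : (0:ℚ) < ((-k : ℤ) : ℚ) := by exact_mod_cast Int.neg_pos.mpr hk0
      have hqpos : 0 < q := inv_pos.mpr hkQ
      have h1 : q • a ∈ Gpos := hsmul q hqpos.le a hpos
      have hkne : (k : ℚ) ≠ 0 := by exact_mod_cast hk0.ne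
      have hmul : q * (k : ℚ) = -1 := by
        rw [hq, show ((-k : ℤ) : ℚ) = -(k : ℚ) by push_cast; ring,
          inv_neg, neg_mul, inv_mul_cancel₀ hkne]
      have h2 : q • a = -x + q • h := by
        rw [← hhz, smul_add, ← hk, ← Int.cast_smul_eq_zsmul ℚ k x, smul_smul, hmul,
          neg_one_smul]
        abel
      have h3 : q • h ∈ H := by
        apply hdiv (q • h) (-k).toNat
        · omega
        have hcast : (((-k).toNat : ℕ) : ℚ) = ((-k : ℤ) : ℚ) := by
          rw [← Int.cast_natCast (R := ℚ), Int.toNat_of_nonneg (by omega)]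
        rw [hcast, smul_smul, mul_inv_cancel₀ hkQ.ne', one_smul]
        exact hh
      exact hB (q • h) h3 (h2 ▸ h1)
    · -- k = 0 : a = h ∈ H ∩ Gpos
      subst hk0
      simp only [zero_smul] at hk
      rw [← hk, add_zero] at hhz
      exact hsing a (hhz ▸ hh) hpos
    · -- k > 0 : contradict hA
      exfalso
      set q : ℚ := ((k : ℤ) : ℚ)⁻¹ with hq
      have hkQ : (0:ℚ) < ((k : ℤ) : ℚ) := by exact_mod_cast hk0
      have hqpos : 0 < q := inv_pos.mpr hkQ
      have h1 : q • a ∈ Gpos := hsmul q hqpos.le a hpos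
      have h2 : q • a = x + q • h := by
        rw [← hhz, ← hk, smul_add, ← Int.cast_smul_eq_zsmul ℚ k x, smul_smul, hq,
          inv_mul_cancel₀ hkQ.ne', one_smul]
        abel
      have h3 : q • h ∈ H := by
        apply hdiv (q • h) k.toNat
        · omega
        have hcast : ((k.toNat : ℕ) : ℚ) = ((k : ℤ) : ℚ) := by
          rw [← Int.cast_natCast (R := ℚ), Int.toNat_of_nonneg (by omega)]
        rw [hcast, smul_smul, mul_inv_cancel₀ hkQ.ne', one_smul]
        exact hh
      exact hA (q • h) h3 (h2 ▸ h1)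
  have hEq : H' = H := hmax H' hsing' (le_sup_left)
  have hxH : x ∈ H := by
    rw [← hEq]
    exact (le_sup_right : AddSubgroup.zmultiples x ≤ H') (AddSubgroup.mem_zmultiples x)
  exact hA (-x) (H.neg_mem hxH) (by simpa using hzero)
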